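/- If ξ* = (w_1,…,w_N) minimizes the convex, linearly differentiable criterion Φ over the set Ξ of bounded approximate designs, i is an index with ν_i < w_i < μ_i, u is an index with w_u = μ_u, and ℓ is an index with w_ℓ = ν_ℓ, then F_Φ(ξ*; u) ≤ F_Φ(ξ*; i) ≤ F_Φ(ξ*; ℓ). -/
import Mathlib

theorem stmt_1
    (N : ℕ) (hN : 1 ≤ N)
    (Δ : Set (Fin N → ℝ))
    (hΔ : Δ = {w : Fin N → ℝ | (∀ i, 0 ≤ w i) ∧ ∑ i, w i = 1})
    (Φ : (Fin N → ℝ) → ℝ)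
    (hconv : ConvexOn ℝ Δ Φ)
    (F : (Fin N → ℝ) → (Fin N → ℝ) → ℝ)
    (hF : ∀ ξ ∈ Δ, ∀ η ∈ Δ,
      Filter.Tendsto (fun α : ℝ => (Φ ((1 - α) • ξ + α • η) - Φ ξ) / α)
        (nhdsWithin 0 (Set.Ioi 0)) (nhds (F ξ η)))
    (hlin : ∀ ξ ∈ Δ, ∀ η ∈ Δ, F ξ η = ∑ i, η i * F ξ (Pi.single i 1))
    (ν μ : Fin N → ℝ)
    (hν0 : ∀ i, 0 ≤ ν i) (hνμ : ∀ i, ν i < μ i) (hμ1 : ∀ i, μ i ≤ 1)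
    (hνsum : ∑ i, ν i ≤ 1) (hμsum : 1 ≤ ∑ i, μ i)
    (Ξ : Set (Fin N → ℝ))
    (hΞ : Ξ = {w : Fin N → ℝ | w ∈ Δ ∧ ∀ i, ν i ≤ w i ∧ w i ≤ μ i})
    (ξs : Fin N → ℝ) (hmem : ξs ∈ Ξ)
    (hopt : ∀ ξ ∈ Ξ, Φ ξs ≤ Φ ξ)
    (i u l : Fin N)
    (hi : ν i < ξs i ∧ ξs i < μ i)
    (hu : ξs u = μ u)
    (hl : ξs l = ν l) :
    F ξs (Pi.single u 1) ≤ F ξs (Pi.single i 1) ∧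
      F ξs (Pi.single i 1) ≤ F ξs (Pi.single l 1) := by
  rw [hΞ] at hmem
  obtain ⟨hmemΔ, hbounds⟩ := hmem
  have hΔmem : ∀ w : Fin N → ℝ, w ∈ Δ ↔ (∀ m, 0 ≤ w m) ∧ ∑ m, w m = 1 := by
    intro w; rw [hΔ]; rfl
  have hξpos : ∀ m, 0 ≤ ξs m := ((hΔmem ξs).1 hmemΔ).1
  have hξsum : ∑ m, ξs m = 1 := ((hΔmem ξs).1 hmemΔ).2
  -- F ξs ξs = 0
  have hF0 : F ξs ξs = 0 := by
    have h := hF ξs hmemΔ ξs hmemΔ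
    have heq : (fun α : ℝ => (Φ ((1 - α) • ξs + α • ξs) - Φ ξs) / α)
        = fun α : ℝ => (0:ℝ) := by
      funext α
      have : (1 - α) • ξs + α • ξs = ξs := by
        rw [← add_smul]; ring_nf; rw [one_smul]
      rw [this]; simp
    rw [heq] at h
    exact tendsto_nhds_unique h tendsto_const_nhds
  have hsum0 : ∑ m, ξs m * F ξs (Pi.single m 1) = 0 := by
    rw [← hlin ξs hmemΔ ξs hmemΔ]; exact hF0
  have hsingle : ∀ a : Fin N,
      ∑ m, (Pi.single a 1 : Fin N → ℝ) m * F ξs (Pi.single m 1) = F ξs (Pi.single a 1) := by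
    intro a
    simp [Pi.single_apply, ite_mul]
  have hsingle1 : ∀ a : Fin N, ∑ m, (Pi.single a 1 : Fin N → ℝ) m = 1 := by
    intro a; simp [Pi.single_apply]
  -- key lemma
  have key : ∀ j k : Fin N, j ≠ k → ξs j < μ j → ν k < ξs k →
      F ξs (Pi.single k 1) ≤ F ξs (Pi.single j 1) := by
    intro j k hjk hj hk
    set t := min (μ j - ξs j) (ξs k - ν k) with ht
    have ht0 : 0 < t := lt_min (by linarith) (by linarith)
    have htj : t ≤ μ j - ξs j := min_le_left _ _
    have htk : t ≤ ξs k - ν k := min_le_right _ _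
    set η : Fin N → ℝ := fun m => ξs m + t * ((Pi.single j 1 : Fin N → ℝ) m - (Pi.single k 1 : Fin N → ℝ) m) with hη
    have hηj : η j = ξs j + t := by
      simp [hη, Pi.single_apply, hjk]
    have hηk : η k = ξs k - t := by
      simp [hη, Pi.single_apply, Ne.symm hjk]; ring
    have hηo : ∀ m, m ≠ j → m ≠ k → η m = ξs m := by
      intro m h1 h2; simp [hη, Pi.single_apply, h1, h2]
    have hηsum : ∑ m, η m = 1 := by
      simp only [hη]
      rw [Finset.sum_add_distrib, hξsum, ← Finset.mul_sum, Finset.sum_sub_distrib,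
        hsingle1, hsingle1]
      ring
    have hηbd : ∀ m, ν m ≤ η m ∧ η m ≤ μ m := by
      intro m
      by_cases h1 : m = j
      · subst h1; rw [hηj]; exact ⟨by linarith [(hbounds m).1], by linarith⟩
      · by_cases h2 : m = k
        · subst h2; rw [hηk]; exact ⟨by linarith, by linarith [(hbounds m).2]⟩
        · rw [hηo m h1 h2]; exact hbounds m
    have hηΔ : η ∈ Δ := by
      rw [hΔmem]
      exact ⟨fun m => le_trans (hν0 m) (hηbd m).1, hηsum⟩
    have hηΞ : η ∈ Ξ := by rw [hΞ]; exact ⟨hηΔ, hηbd⟩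
    -- F ξs η ≥ 0
    have hFpos : 0 ≤ F ξs η := by
      refine ge_of_tendsto (hF ξs hmemΔ η hηΔ) ?_
      filter_upwards [Ioo_mem_nhdsGT_of_mem (by norm_num : (0:ℝ) ∈ Set.Ico 0 1)]
        with α hα
      have hα0 : 0 < α := hα.1
      have hα1 : α < 1 := hα.2
      have hpt : (1 - α) • ξs + α • η ∈ Ξ := by
        rw [hΞ]
        constructor
        · rw [hΔmem]
          constructor
          · intro m
            have h1 := le_trans (hν0 m) (hηbd m).1
            have := hξpos m
            simp only [Pi.add_apply, Pi.smul_apply, smul_eq_mul]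
            nlinarith
          · simp only [Pi.add_apply, Pi.smul_apply, smul_eq_mul]
            rw [Finset.sum_add_distrib, ← Finset.mul_sum, ← Finset.mul_sum,
              hξsum, hηsum]
            ring
        · intro m
          have h1 := (hηbd m).1
          have h2 := (hηbd m).2
          have h3 := (hbounds m).1
          have h4 := (hbounds m).2
          simp only [Pi.add_apply, Pi.smul_apply, smul_eq_mul]
          constructor <;> nlinarith
      have := hopt _ hpt
      exact div_nonneg (by linarith) hα0.le
    have hFη : F ξs η = t * (F ξs (Pi.single j 1) - F ξs (Pi.single k 1)) := by
      rw [hlin ξs hmemΔ η hηΔ]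
      simp only [hη]
      have : ∀ m, (ξs m + t * ((Pi.single j 1 : Fin N → ℝ) m - (Pi.single k 1 : Fin N → ℝ) m)) * F ξs (Pi.single m 1)
          = ξs m * F ξs (Pi.single m 1)
            + t * ((Pi.single j 1 : Fin N → ℝ) m * F ξs (Pi.single m 1))
            - t * ((Pi.single k 1 : Fin N → ℝ) m * F ξs (Pi.single m 1)) := by
        intro m; ring
      rw [Finset.sum_congr rfl (fun m _ => this m)]
      rw [Finset.sum_sub_distrib, Finset.sum_add_distrib, ← Finset.mul_sum,
        ← Finset.mul_sum, hsum0, hsingle, hsingle]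
      ring
    rw [hFη] at hFpos
    nlinarith
  have hui : u ≠ i := by
    intro h; subst h; exact absurd hu (ne_of_lt hi.2)
  have hil : i ≠ l := by
    intro h; subst h; exact absurd hl (ne_of_gt hi.1)
  constructor
  · exact key i u (Ne.symm hui) hi.2 (by rw [hu]; exact hνμ u)
  · exact key l i (Ne.symm hil) (by rw [hl]; exact hνμ l) hi.1
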